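/- The set A = {±6^n : n ≥ 0} ∪ {0} satisfies property P(3). -/

import Mathlib

/-- `s` is a representation of `D` as a sum of `h` elements of `A` (as a multiset). -/
def IsRep (A : Set ℤ) (h : ℕ) (D : ℤ) (s : Multiset ℤ) : Prop :=
  Multiset.card s = h ∧ (∀ x ∈ s, x ∈ A) ∧ s.sum = D

/-- A core multiset for property `P(h)`: at most `h` elements of `A`, with the same
parity of cardinality as `h`, and with `aᵢ ≠ -aⱼ` for `i ≠ j`. -/
def IsCore (A : Set ℤ) (h : ℕ) (c : Multiset ℤ) : Prop :=
  Multiset.card c ≤ h ∧ Multiset.card c % 2 = h % 2 ∧ (∀ x ∈ c, x ∈ A) ∧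
    ∀ x ∈ c, -x ∉ c.erase x

/-- `s` is, up to permutation, the core `c` together with cancelling pairs `(u, -u)`
with `u ∈ A ∩ (-A)`. -/
def MatchesCore (A : Set ℤ) (c s : Multiset ℤ) : Prop :=
  ∃ p : Multiset ℤ, (∀ u ∈ p, u ∈ A ∧ -u ∈ A) ∧ s = c + p + p.map (fun u => -u)

/-- Property `P(h)`: every `D` in the `h`-fold sumset of `A` has a unique core, such that
every representation of `D` as a sum of `h` elements of `A` is a permutation of the core
together with cancelling pairs `(u, -u)`, `u ∈ A ∩ (-A)`. -/
def PropertyP (A : Set ℤ) (h : ℕ) : Prop :=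
  ∀ D : ℤ, (∃ s, IsRep A h D s) →
    ∃! c : Multiset ℤ, IsCore A h c ∧ ∀ s, IsRep A h D s → MatchesCore A c s

/-- `S` is a `B_h`-set: any two `h`-tuples of elements of `S` with equal sums are
permutations of each other. -/
def IsBhSet (S : Set ℤ) (h : ℕ) : Prop :=
  ∀ s t : Multiset ℤ, Multiset.card s = h → Multiset.card t = h →
    (∀ x ∈ s, x ∈ S) → (∀ x ∈ t, x ∈ S) → s.sum = t.sum → s = t


def Aset : Set ℤ := {x : ℤ | (∃ n : ℕ, x = 6 ^ n ∨ x = -(6 ^ n)) ∨ x = 0}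

lemma decomp_one (a : ℤ) (s : Multiset ℤ) :
    s = Multiset.replicate (s.count a) a + s.filter (fun x => x ≠ a) := by
  ext z
  rw [Multiset.count_add, Multiset.count_replicate, Multiset.count_filter]
  by_cases h : z = a
  · subst h; simp
  · simp [h, Ne.symm h]

lemma split3 (s : Multiset ℤ) (hnc : ∀ x ∈ s, -x ∉ s) :
    ∃ (a b : ℕ) (r : Multiset ℤ),
      s = Multiset.replicate a 1 + (Multiset.replicate b (-1) + r) ∧
      (a = 0 ∨ b = 0) ∧
      Multiset.card s = a + b + Multiset.card r ∧
      s.sum = (a : ℤ) - b + r.sum ∧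
      (∀ x ∈ r, x ∈ s ∧ x ≠ 1 ∧ x ≠ -1) := by
  set s1 := s.filter (fun x => x ≠ 1) with hs1
  set r := s1.filter (fun x => x ≠ (-1)) with hr
  have h1 : s = Multiset.replicate (s.count 1) 1 + s1 := decomp_one 1 s
  have hc : s1.count (-1) = s.count (-1) := by
    rw [hs1, Multiset.count_filter]; simp
  have h2 : s1 = Multiset.replicate (s.count (-1)) (-1) + r := by
    rw [← hc]; exact decomp_one (-1) s1
  have hS : s = Multiset.replicate (s.count 1) 1 + (Multiset.replicate (s.count (-1)) (-1) + r) := by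
    conv_lhs => rw [h1, h2]
  have hmemr : ∀ x ∈ r, x ∈ s ∧ x ≠ 1 ∧ x ≠ -1 := by
    intro x hx
    rw [hr, Multiset.mem_filter] at hx
    obtain ⟨hx1, hx2⟩ := hx
    rw [hs1, Multiset.mem_filter] at hx1
    exact ⟨hx1.1, hx1.2, hx2⟩
  refine ⟨s.count 1, s.count (-1), r, hS, ?_, ?_, ?_, hmemr⟩
  · by_contra h
    push_neg at h
    have h1m : (1 : ℤ) ∈ s := Multiset.count_pos.mp (Nat.pos_of_ne_zero h.1)
    have h2m : (-1 : ℤ) ∈ s := Multiset.count_pos.mp (Nat.pos_of_ne_zero h.2)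
    exact hnc 1 h1m h2m
  · conv_lhs => rw [hS]
    simp
    omega
  · conv_lhs => rw [hS]
    simp [Multiset.sum_replicate]
    ring

lemma pow_uniq (N : ℕ) : ∀ (s t : Multiset ℤ),
    Multiset.card s ≤ 3 → Multiset.card t ≤ 3 →
    (∀ x ∈ s, ∃ n : ℕ, n ≤ N ∧ (x = 6 ^ n ∨ x = -(6 ^ n))) →
    (∀ x ∈ t, ∃ n : ℕ, n ≤ N ∧ (x = 6 ^ n ∨ x = -(6 ^ n))) →
    (∀ x ∈ s, -x ∉ s) → (∀ x ∈ t, -x ∉ t) →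
    s.sum = t.sum → s = t := by
  induction N with
  | zero =>
    intro s t hcs hct hes het hns hnt hsum
    obtain ⟨a, b, r, hsd, hab, hcard, hsums, hmr⟩ := split3 s hns
    obtain ⟨c, d, r', htd, hcd, hcard', hsumt, hmr'⟩ := split3 t hnt
    have hr0 : r = 0 := by
      rw [Multiset.eq_zero_iff_forall_notMem]
      intro x hx
      obtain ⟨hxs, hx1, hx2⟩ := hmr x hx
      obtain ⟨n, hn, hv⟩ := hes x hxs
      interval_cases n
      simp only [pow_zero] at hv
      rcases hv with h | h
      · exact hx1 h
      · exact hx2 h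
    have hr0' : r' = 0 := by
      rw [Multiset.eq_zero_iff_forall_notMem]
      intro x hx
      obtain ⟨hxs, hx1, hx2⟩ := hmr' x hx
      obtain ⟨n, hn, hv⟩ := het x hxs
      interval_cases n
      simp only [pow_zero] at hv
      rcases hv with h | h
      · exact hx1 h
      · exact hx2 h
    subst hr0 hr0'
    simp only [Multiset.sum_zero] at hsums hsumt
    have hac : a = c ∧ b = d := by
      rw [hsums, hsumt] at hsum; constructor <;> omega
    rw [hsd, htd, hac.1, hac.2]
  | succ N ih =>
    intro s t hcs hct hes het hns hnt hsum
    obtain ⟨a, b, r, hsd, hab, hcard, hsums, hmr⟩ := split3 s hns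
    obtain ⟨c, d, r', htd, hcd, hcard', hsumt, hmr'⟩ := split3 t hnt
    have key : ∀ x ∈ r, x = 6 * (x / 6) ∧ ∃ n : ℕ, n ≤ N ∧ (x / 6 = 6 ^ n ∨ x / 6 = -(6 ^ n)) := by
      intro x hx
      obtain ⟨hxs, hx1, hx2⟩ := hmr x hx
      obtain ⟨n, hn, hv⟩ := hes x hxs
      have hn0 : n ≠ 0 := by
        rintro rfl
        simp only [pow_zero] at hv
        rcases hv with h | h
        · exact hx1 h
        · exact hx2 h
      obtain ⟨m, rfl⟩ := Nat.exists_eq_succ_of_ne_zero hn0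
      have h6 : (6 : ℤ) ^ (m + 1) = 6 * 6 ^ m := by ring
      rcases hv with h | h
      · have hd : x / 6 = 6 ^ m := by rw [h, h6, Int.mul_ediv_cancel_left _ (by norm_num)]
        exact ⟨by rw [hd, h, h6], m, by omega, Or.inl hd⟩
      · have hd : x / 6 = -(6 ^ m) := by
          rw [h, h6, show -(6 * (6:ℤ) ^ m) = 6 * (-(6 ^ m)) by ring,
            Int.mul_ediv_cancel_left _ (by norm_num)]
        exact ⟨by rw [hd, h, h6]; ring, m, by omega, Or.inr hd⟩
    have key' : ∀ x ∈ r', x = 6 * (x / 6) ∧ ∃ n : ℕ, n ≤ N ∧ (x / 6 = 6 ^ n ∨ x / 6 = -(6 ^ n)) := by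
      intro x hx
      obtain ⟨hxs, hx1, hx2⟩ := hmr' x hx
      obtain ⟨n, hn, hv⟩ := het x hxs
      have hn0 : n ≠ 0 := by
        rintro rfl
        simp only [pow_zero] at hv
        rcases hv with h | h
        · exact hx1 h
        · exact hx2 h
      obtain ⟨m, rfl⟩ := Nat.exists_eq_succ_of_ne_zero hn0
      have h6 : (6 : ℤ) ^ (m + 1) = 6 * 6 ^ m := by ring
      rcases hv with h | h
      · have hd : x / 6 = 6 ^ m := by rw [h, h6, Int.mul_ediv_cancel_left _ (by norm_num)]
        exact ⟨by rw [hd, h, h6], m, by omega, Or.inl hd⟩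
      · have hd : x / 6 = -(6 ^ m) := by
          rw [h, h6, show -(6 * (6:ℤ) ^ m) = 6 * (-(6 ^ m)) by ring,
            Int.mul_ediv_cancel_left _ (by norm_num)]
        exact ⟨by rw [hd, h, h6]; ring, m, by omega, Or.inr hd⟩
    have h6R : (6 : ℤ) ∣ r.sum := Multiset.dvd_sum (fun x hx => ⟨x / 6, (key x hx).1⟩)
    have h6R' : (6 : ℤ) ∣ r'.sum := Multiset.dvd_sum (fun x hx => ⟨x / 6, (key' x hx).1⟩)
    have habcd : a = c ∧ b = d := by
      by_contra h
      have hext : (a = 3 ∧ b = 0 ∧ c = 0 ∧ d = 3) ∨ (a = 0 ∧ b = 3 ∧ c = 3 ∧ d = 0) := by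
        rw [hsums, hsumt] at hsum
        omega
      have hcr : Multiset.card r = 0 := by omega
      have hcr' : Multiset.card r' = 0 := by omega
      rw [Multiset.card_eq_zero] at hcr hcr'
      rw [hsums, hsumt, hcr, hcr'] at hsum
      simp only [Multiset.sum_zero] at hsum
      omega
    obtain ⟨rfl, rfl⟩ := habcd
    have hRR : r.sum = r'.sum := by rw [hsums, hsumt] at hsum; linarith
    set r2 := r.map (fun x => x / 6) with hr2
    set r2' := r'.map (fun x => x / 6) with hr2'
    have hrmap : r = r2.map (fun y => 6 * y) := by
      rw [hr2, Multiset.map_map]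
      conv_lhs => rw [show r = r.map id from (Multiset.map_id r).symm]
      exact Multiset.map_congr rfl (fun x hx => (key x hx).1)
    have hrmap' : r' = r2'.map (fun y => 6 * y) := by
      rw [hr2', Multiset.map_map]
      conv_lhs => rw [show r' = r'.map id from (Multiset.map_id r').symm]
      exact Multiset.map_congr rfl (fun x hx => (key' x hx).1)
    have heq : r2 = r2' := by
      apply ih
      · rw [hr2, Multiset.card_map]; omega
      · rw [hr2', Multiset.card_map]; omega
      · intro y hy
        obtain ⟨x, hx, rfl⟩ := Multiset.mem_map.mp hy
        exact (key x hx).2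
      · intro y hy
        obtain ⟨x, hx, rfl⟩ := Multiset.mem_map.mp hy
        exact (key' x hx).2
      · intro y hy hny
        obtain ⟨x, hx, rfl⟩ := Multiset.mem_map.mp hy
        obtain ⟨x', hx', hxe⟩ := Multiset.mem_map.mp hny
        have hxx : x' = -x := by
          have e1 := (key x' hx').1
          have e2 := (key x hx).1
          rw [hxe] at e1
          omega
        exact hns x (hmr x hx).1 (hxx ▸ (hmr x' hx').1)
      · intro y hy hny
        obtain ⟨x, hx, rfl⟩ := Multiset.mem_map.mp hy
        obtain ⟨x', hx', hxe⟩ := Multiset.mem_map.mp hny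
        have hxx : x' = -x := by
          have e1 := (key' x' hx').1
          have e2 := (key' x hx).1
          rw [hxe] at e1
          omega
        exact hnt x (hmr' x hx).1 (hxx ▸ (hmr' x' hx').1)
      · have e1 : r.sum = 6 * r2.sum := by
          conv_lhs => rw [hrmap]
          rw [show (fun y => (6:ℤ) * y) = (fun y => (6:ℤ) * id y) from rfl,
            Multiset.sum_map_mul_left, Multiset.map_id]
        have e2 : r'.sum = 6 * r2'.sum := by
          conv_lhs => rw [hrmap']
          rw [show (fun y => (6:ℤ) * y) = (fun y => (6:ℤ) * id y) from rfl,
            Multiset.sum_map_mul_left, Multiset.map_id]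
        rw [e1, e2] at hRR
        linarith
    rw [hsd, htd, hrmap, hrmap', heq]

lemma Aset_def (x : ℤ) : x ∈ Aset ↔ (∃ n : ℕ, x = 6 ^ n ∨ x = -(6 ^ n)) ∨ x = 0 := Iff.rfl

/-- Two cores (for h = 3) of `Aset` with the same sum are equal. -/
lemma coreUniq {c c' : Multiset ℤ} (hc : IsCore Aset 3 c) (hc' : IsCore Aset 3 c')
    (hsum : c.sum = c'.sum) : c = c' := by
  obtain ⟨hc1, hc2, hc3, hc4⟩ := hc
  obtain ⟨hc1', hc2', hc3', hc4'⟩ := hc'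
  -- at most one zero in each core
  have hz : ∀ (m : Multiset ℤ), (∀ x ∈ m, -x ∉ m.erase x) → m.count 0 ≤ 1 := by
    intro m hm
    by_contra h
    push_neg at h
    have h0 : (0 : ℤ) ∈ m := Multiset.count_pos.mp (by omega)
    have h1 : (0 : ℤ) ∈ m.erase 0 := by
      rw [← Multiset.count_pos, Multiset.count_erase_self]
      omega
    exact hm 0 h0 (by simpa using h1)
  have hz1 := hz c hc4
  have hz1' := hz c' hc4'
  set c0 := c.filter (fun x => x ≠ 0) with hc0
  set c0' := c'.filter (fun x => x ≠ 0) with hc0'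
  have hd : c = Multiset.replicate (c.count 0) 0 + c0 := decomp_one 0 c
  have hd' : c' = Multiset.replicate (c'.count 0) 0 + c0' := decomp_one 0 c'
  have hmem0 : ∀ x ∈ c0, x ∈ c ∧ ∃ n : ℕ, x = 6 ^ n ∨ x = -(6 ^ n) := by
    intro x hx
    rw [hc0, Multiset.mem_filter] at hx
    rcases hc3 x hx.1 with h | h
    · exact ⟨hx.1, h⟩
    · exact absurd h hx.2
  have hmem0' : ∀ x ∈ c0', x ∈ c' ∧ ∃ n : ℕ, x = 6 ^ n ∨ x = -(6 ^ n) := by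
    intro x hx
    rw [hc0', Multiset.mem_filter] at hx
    rcases hc3' x hx.1 with h | h
    · exact ⟨hx.1, h⟩
    · exact absurd h hx.2
  -- common exponent bound
  set N := (c0.map Int.natAbs).sum + (c0'.map Int.natAbs).sum with hN
  have hbound : ∀ (m : Multiset ℤ), (∀ x ∈ m, (m.map Int.natAbs).sum ≤ N) →
      (∀ x ∈ m, ∃ n : ℕ, x = 6 ^ n ∨ x = -(6 ^ n)) →
      ∀ x ∈ m, ∃ n : ℕ, n ≤ N ∧ (x = 6 ^ n ∨ x = -(6 ^ n)) := by
    intro m hle hP x hx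
    obtain ⟨n, hn⟩ := hP x hx
    refine ⟨n, ?_, hn⟩
    have habs : x.natAbs = 6 ^ n := by
      rcases hn with h | h <;> rw [h] <;> simp [Int.natAbs_pow]
    have h1 : n < 6 ^ n := Nat.lt_pow_self (by norm_num)
    have h2 : x.natAbs ≤ (m.map Int.natAbs).sum :=
      Multiset.single_le_sum (fun y _ => Nat.zero_le y) _ (Multiset.mem_map_of_mem _ hx)
    have := hle x hx
    omega
  have hb1 : ∀ x ∈ c0, ∃ n : ℕ, n ≤ N ∧ (x = 6 ^ n ∨ x = -(6 ^ n)) :=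
    hbound c0 (fun x _ => by omega) (fun x hx => (hmem0 x hx).2)
  have hb2 : ∀ x ∈ c0', ∃ n : ℕ, n ≤ N ∧ (x = 6 ^ n ∨ x = -(6 ^ n)) :=
    hbound c0' (fun x _ => by omega) (fun x hx => (hmem0' x hx).2)
  -- strong no-cancellation on the nonzero parts
  have hnc : ∀ (m m0 : Multiset ℤ), m0 = m.filter (fun x => x ≠ 0) →
      (∀ x ∈ m, -x ∉ m.erase x) → ∀ x ∈ m0, -x ∉ m0 := by
    intro m m0 hm0 hm x hx hnx
    rw [hm0, Multiset.mem_filter] at hx hnx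
    have hxne : -x ≠ x := by
      intro h
      apply hnx.2
      omega
    exact hm x hx.1 (Multiset.mem_erase_of_ne hxne |>.mpr hnx.1)
  have hnc1 := hnc c c0 hc0 hc4
  have hnc2 := hnc c' c0' hc0' hc4'
  -- sums of nonzero parts agree
  have hsum0 : c0.sum = c0'.sum := by
    have e1 : c.sum = c0.sum := by conv_lhs => rw [hd]; rw [Multiset.sum_add]; simp
    have e2 : c'.sum = c0'.sum := by conv_lhs => rw [hd']; rw [Multiset.sum_add]; simp
    rw [← e1, ← e2, hsum]
  -- cards
  have hcard : Multiset.card c = c.count 0 + Multiset.card c0 := by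
    conv_lhs => rw [hd]
    simp
  have hcard' : Multiset.card c' = c'.count 0 + Multiset.card c0' := by
    conv_lhs => rw [hd']
    simp
  have h00 : c0 = c0' := by
    apply pow_uniq N c0 c0' (by omega) (by omega) hb1 hb2 hnc1 hnc2 hsum0
  have hzz : c.count 0 = c'.count 0 := by
    have := congrArg Multiset.card h00
    omega
  rw [hd, hd', hzz, h00]

lemma sum_neg_aux (p : Multiset ℤ) : (p.map (fun u => -u)).sum = -p.sum := by
  induction p using Multiset.induction with
  | empty => simp
  | cons a q ih => simp only [Multiset.map_cons, Multiset.sum_cons, ih]; ring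

/-- Every 3-element representation over `Aset` reduces to a core it matches. -/
lemma reduceRep (D : ℤ) (s : Multiset ℤ) (hs : IsRep Aset 3 D s) :
    ∃ c, IsCore Aset 3 c ∧ MatchesCore Aset c s ∧ c.sum = D := by
  obtain ⟨hcard, hmem, hsum⟩ := hs
  by_cases h : ∃ x ∈ s, -x ∈ s.erase x
  · obtain ⟨x, hx, hx'⟩ := h
    set c := (s.erase x).erase (-x) with hcdef
    have e1 : (-x) ::ₘ c = s.erase x := Multiset.cons_erase hx'
    have e2 : x ::ₘ (-x) ::ₘ c = s := by rw [e1]; exact Multiset.cons_erase hx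
    have hcc : Multiset.card c = 1 := by
      have := congrArg Multiset.card e2
      simp at this
      omega
    have hcm : ∀ y ∈ c, y ∈ Aset := by
      intro y hy
      exact hmem y (Multiset.mem_of_mem_erase (Multiset.mem_of_mem_erase hy))
    refine ⟨c, ⟨by omega, by omega, hcm, ?_⟩, ⟨{x}, ?_, ?_⟩, ?_⟩
    · intro y hy
      have : Multiset.card (c.erase y) = 0 := by
        rw [Multiset.card_erase_of_mem hy, hcc]
        rfl
      rw [Multiset.card_eq_zero] at this
      rw [this]
      exact Multiset.notMem_zero _
    · intro u hu
      rw [Multiset.mem_singleton.mp hu]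
      exact ⟨hmem x hx, hmem (-x) (Multiset.mem_of_mem_erase hx')⟩
    · rw [Multiset.map_singleton]
      rw [← e2]
      ext z
      simp [Multiset.count_cons, Multiset.count_singleton]
      omega
    · have := congrArg Multiset.sum e2
      simp only [Multiset.sum_cons] at this
      omega
  · push_neg at h
    exact ⟨s, ⟨by omega, by omega, hmem, h⟩, ⟨0, by simp, by simp⟩, hsum⟩

/-- The set of all ±6^n together with 0 satisfies property P(3). -/
theorem statement12 :
    PropertyP {x : ℤ | (∃ n : ℕ, x = 6 ^ n ∨ x = -(6 ^ n)) ∨ x = 0} 3 := by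
  show PropertyP Aset 3
  intro D hD
  obtain ⟨s0, hs0⟩ := hD
  obtain ⟨c, hc, hm, hsumc⟩ := reduceRep D s0 hs0
  refine ⟨c, ⟨hc, fun s hs => ?_⟩, ?_⟩
  · obtain ⟨c2, hc2, hm2, hsumc2⟩ := reduceRep D s hs
    rw [coreUniq hc hc2 (hsumc.trans hsumc2.symm)]
    exact hm2
  · rintro c' ⟨hc', hall⟩
    obtain ⟨p, hp, hps⟩ := hall s0 hs0
    have hsums0 : s0.sum = D := hs0.2.2
    have hnegsum : (p.map (fun u => -u)).sum = -p.sum := sum_neg_aux p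
    have hc'sum : c'.sum = D := by
      rw [hps] at hsums0
      rw [Multiset.sum_add, Multiset.sum_add, hnegsum] at hsums0
      omega
    exact coreUniq hc' hc (hc'sum.trans hsumc.symm)
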